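/- Let M = Σ_g c_g g ∈ ℝG be *-invariant (i.e. M* = M, equivalently c_{g⁻¹} = c_g for all g). Then M + ‖M‖₁ is a sum of hermitian squares in ℝG, where ‖M‖₁ = Σ_g |c_g|. -/

import Mathlib

/-- The group-ring involution on `ℝG` determined by `g ↦ g⁻¹`. -/
noncomputable def gstar {G : Type*} [Group G] (x : MonoidAlgebra ℝ G) : MonoidAlgebra ℝ G :=
  MonoidAlgebra.ofCoeff (Finsupp.equivMapDomain (Equiv.inv G) x.coeff)

section GroupRingStar
variable {G : Type*} [Group G]

lemma gstar_single (g : G) (a : ℝ) :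
    gstar (MonoidAlgebra.single g a) = MonoidAlgebra.single g⁻¹ a := by
  simp [gstar, Finsupp.equivMapDomain_single]

lemma gstar_add (x y : MonoidAlgebra ℝ G) : gstar (x + y) = gstar x + gstar y :=
  congrArg MonoidAlgebra.ofCoeff (map_add (Finsupp.domCongr (M := ℝ) (Equiv.inv G)) x.coeff y.coeff)

lemma gstar_zero : gstar (0 : MonoidAlgebra ℝ G) = 0 := by ext g; simp [gstar]

lemma gstar_gstar (x : MonoidAlgebra ℝ G) : gstar (gstar x) = x := by
  ext g; simp [gstar]

lemma gstar_mul (x y : MonoidAlgebra ℝ G) : gstar (x * y) = gstar y * gstar x := by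
  induction x using MonoidAlgebra.induction_linear with
  | zero => simp [gstar_zero]
  | add f g hf hg => rw [add_mul, gstar_add, hf, hg, gstar_add, mul_add]
  | single g a =>
    induction y using MonoidAlgebra.induction_linear with
    | zero => simp [gstar_zero]
    | add f g' hf hg => rw [mul_add, gstar_add, hf, hg, gstar_add, add_mul]
    | single h b =>
      rw [MonoidAlgebra.single_mul_single, gstar_single, gstar_single, gstar_single,
        MonoidAlgebra.single_mul_single, mul_inv_rev, mul_comm]

/-- `ℝG` as a `*`-ring, with `star` induced by `g ↦ g⁻¹`. -/
noncomputable instance groupRingStar : StarRing (MonoidAlgebra ℝ G) where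
  star := gstar
  star_involutive := gstar_gstar
  star_add := gstar_add
  star_mul := gstar_mul

lemma star_of (g : G) : star (MonoidAlgebra.of ℝ G g) = MonoidAlgebra.of ℝ G g⁻¹ := by
  show gstar _ = _
  simp [MonoidAlgebra.of_apply, gstar_single]

end GroupRingStar

/-- The `ℓ¹`-norm of an element of the group ring `ℝG`. -/
noncomputable def l1Norm {G : Type*} [Group G] (x : MonoidAlgebra ℝ G) : ℝ :=
  ∑ g ∈ x.coeff.support, |x.coeff g|

/-- An element of `ℝG` is a sum of hermitian squares. -/
def IsSOS {G : Type*} [Group G] (x : MonoidAlgebra ℝ G) : Prop :=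
  ∃ (k : ℕ) (ξ : Fin k → MonoidAlgebra ℝ G), x = ∑ i, star (ξ i) * ξ i


-- auxiliary lemmas
lemma gstar_smul' {G : Type*} [Group G] (r : ℝ) (x : MonoidAlgebra ℝ G) :
    star (r • x) = r • star x := by
  show gstar (r • x) = r • gstar x
  ext g
  show (r • x).coeff g⁻¹ = (r • gstar x).coeff g
  rw [MonoidAlgebra.coeff_smul_apply, MonoidAlgebra.coeff_smul_apply]
  rfl

lemma gstar_sum {G : Type*} [Group G] {ι : Type*} (t : Finset ι)
    (f : ι → MonoidAlgebra ℝ G) : gstar (∑ i ∈ t, f i) = ∑ i ∈ t, gstar (f i) := by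
  induction t using Finset.cons_induction with
  | empty => simp [gstar_zero]
  | cons a t ha ih => rw [Finset.sum_cons, Finset.sum_cons, gstar_add, ih]

lemma key_square {G : Type*} [Group G] (c : ℝ) (hc : c ≠ 0) (g : G) :
    star (Real.sqrt (|c|/2) • ((1 : MonoidAlgebra ℝ G) + Real.sign c • MonoidAlgebra.of ℝ G g)) *
      (Real.sqrt (|c|/2) • ((1 : MonoidAlgebra ℝ G) + Real.sign c • MonoidAlgebra.of ℝ G g))
    = |c| • (1 : MonoidAlgebra ℝ G)
      + ((c/2) • MonoidAlgebra.of ℝ G g + (c/2) • MonoidAlgebra.of ℝ G g⁻¹) := by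
  have hs : Real.sign c * Real.sign c = 1 := by
    rcases lt_or_gt_of_ne hc with h | h
    · rw [Real.sign_of_neg h]; norm_num
    · rw [Real.sign_of_pos h]; norm_num
  have hsc : |c| / 2 * Real.sign c = c / 2 := by
    rcases lt_or_gt_of_ne hc with h | h
    · rw [Real.sign_of_neg h, abs_of_neg h]; ring
    · rw [Real.sign_of_pos h, abs_of_pos h]; ring
  rw [gstar_smul', star_add, star_one, gstar_smul', star_of]
  rw [smul_mul_smul_comm, Real.mul_self_sqrt (by positivity)]
  have hog : (MonoidAlgebra.of ℝ G g⁻¹) * MonoidAlgebra.of ℝ G g = 1 := by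
    rw [← map_mul, inv_mul_cancel, map_one]
  rw [add_mul, mul_add, mul_add, one_mul, mul_one, smul_mul_smul_comm, hs, hog, one_smul]
  simp only [smul_add, smul_smul, one_mul, hsc]
  rw [show (|c| : ℝ) = |c|/2 + |c|/2 by ring, add_smul]
  module

/-- if `M ∈ ℝG` is `*`-invariant then `M + ‖M‖₁` is a sum of hermitian
squares. -/
theorem statement2 {G : Type*} [Group G] (M : MonoidAlgebra ℝ G) (hM : star M = M) :
    IsSOS (M + l1Norm M • (1 : MonoidAlgebra ℝ G)) := by
  classical
  set s := M.coeff.support with hsdef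
  set η : {x // x ∈ s} → MonoidAlgebra ℝ G := fun x =>
    Real.sqrt (|M.coeff (x : G)|/2) • ((1 : MonoidAlgebra ℝ G) +
      Real.sign (M.coeff (x : G)) • MonoidAlgebra.of ℝ G (x : G)) with hη
  refine ⟨s.card, fun i => η (s.equivFin.symm i), ?_⟩
  have step1 : ∑ i : Fin s.card, star (η (s.equivFin.symm i)) * η (s.equivFin.symm i)
      = ∑ x : {x // x ∈ s}, star (η x) * η x :=
    Equiv.sum_comp s.equivFin.symm (fun x => star (η x) * η x)
  rw [step1]
  have step2 : ∀ x : {x // x ∈ s}, star (η x) * η x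
      = |M.coeff (x : G)| • (1 : MonoidAlgebra ℝ G)
        + ((M.coeff (x : G)/2) • MonoidAlgebra.of ℝ G (x : G)
          + (M.coeff (x : G)/2) • MonoidAlgebra.of ℝ G ((x : G))⁻¹) := fun x =>
    key_square _ (Finsupp.mem_support_iff.mp x.2) _
  rw [Finset.sum_congr rfl (fun x _ => step2 x)]
  rw [Finset.sum_coe_sort s (fun g => |M.coeff g| • (1 : MonoidAlgebra ℝ G)
    + ((M.coeff g/2) • MonoidAlgebra.of ℝ G g + (M.coeff g/2) • MonoidAlgebra.of ℝ G g⁻¹))]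
  rw [Finset.sum_add_distrib, Finset.sum_add_distrib, ← Finset.sum_smul]
  have hMsum : ∑ g ∈ s, (M.coeff g) • MonoidAlgebra.of ℝ G g = M := by
    have : ∀ g ∈ s, (M.coeff g) • MonoidAlgebra.of ℝ G g = MonoidAlgebra.single g (M.coeff g) := by
      intro g _
      rw [MonoidAlgebra.of_apply, MonoidAlgebra.smul_single', mul_one]
    rw [Finset.sum_congr rfl this]
    exact MonoidAlgebra.sum_coeff_single M
  have h1 : ∑ g ∈ s, (M.coeff g/2) • MonoidAlgebra.of ℝ G g = (1/2 : ℝ) • M := by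
    have e1 : ∑ g ∈ s, (M.coeff g/2) • MonoidAlgebra.of ℝ G g
        = (1/2 : ℝ) • ∑ g ∈ s, (M.coeff g) • MonoidAlgebra.of ℝ G g := by
      rw [Finset.smul_sum]
      refine Finset.sum_congr rfl fun g _ => ?_
      rw [smul_smul]; congr 1; ring
    rw [e1, hMsum]
  have h2 : ∑ g ∈ s, (M.coeff g/2) • MonoidAlgebra.of ℝ G g⁻¹ = (1/2 : ℝ) • M := by
    have hg : ∀ g ∈ s, (M.coeff g/2) • MonoidAlgebra.of ℝ G g⁻¹
        = gstar ((M.coeff g/2) • MonoidAlgebra.of ℝ G g) := by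
      intro g _
      rw [show gstar ((M.coeff g/2) • MonoidAlgebra.of ℝ G g)
          = star ((M.coeff g/2) • MonoidAlgebra.of ℝ G g) from rfl, gstar_smul', star_of]
    rw [Finset.sum_congr rfl hg, ← gstar_sum, h1]
    show star ((1/2 : ℝ) • M) = _
    rw [gstar_smul', hM]
  rw [h1, h2]
  have hl1 : l1Norm M = ∑ g ∈ s, |M.coeff g| := rfl
  rw [← hl1]
  rw [← add_smul]
  norm_num
  abel
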